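/- Let c ∈ ℂ. If there exists a monic polynomial P ∈ ℂ[X] such that X(X − 1)·P(X) = (X + c)(X + c − 1)·P(X + 2) (equality of polynomials), then −c is a nonnegative integer. -/
import Mathlib


open Polynomial

/-- Let `c ∈ ℂ`. If there exists a monic polynomial `P ∈ ℂ[X]` with
`X(X - 1)·P(X) = (X + c)(X + c - 1)·P(X + 2)`, then `-c` is a nonnegative integer. -/
theorem neg_nonneg_int_of_monic_two_shift (c : ℂ)
    (h : ∃ P : Polynomial ℂ, P.Monic ∧
      X * (X - 1) * P = (X + C c) * (X + C c - 1) * (P.comp (X + 2))) :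
    ∃ k : ℕ, -c = (k : ℂ) := by
  obtain ⟨P, hP, heq⟩ := h
  by_contra hc
  push_neg at hc
  have key : ∀ x : ℂ, x * (x - 1) * P.eval x
      = (x + c) * (x + c - 1) * P.eval (x + 2) := by
    intro x
    have := congrArg (Polynomial.eval x) heq
    simpa [Polynomial.eval_comp] using this
  have hroot : ∀ k : ℕ, P.eval (-c - 2 * k) = 0 := by
    intro k
    induction k with
    | zero =>
      have h0 := key (-c)
      have hz : (-c + c) = 0 := by ring
      rw [hz] at h0
      simp only [zero_mul, mul_eq_zero] at h0
      rcases h0 with ((h0 | h0) | h0)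
      · exact absurd (by push_cast; linear_combination h0 : -c = ((0 : ℕ) : ℂ)) (hc 0)
      · exact absurd (by push_cast; linear_combination h0 : -c = ((1 : ℕ) : ℂ)) (hc 1)
      · simpa using h0
    | succ k ih =>
      have h0 := key (-c - 2 * (k + 1))
      have hx2 : (-c - 2 * (k + 1) : ℂ) + 2 = -c - 2 * k := by ring
      rw [hx2, ih, mul_zero] at h0
      simp only [mul_eq_zero] at h0
      rcases h0 with ((h0 | h0) | h0)
      · exact absurd (by push_cast; linear_combination h0 : -c = ((2 * (k + 1) : ℕ) : ℂ))
          (hc (2 * (k + 1)))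
      · exact absurd (by push_cast; linear_combination h0 : -c = ((2 * k + 3 : ℕ) : ℂ))
          (hc (2 * k + 3))
      · convert h0 using 2
        push_cast; ring
  have hfin : {x : ℂ | P.IsRoot x}.Finite := Polynomial.finite_setOf_isRoot hP.ne_zero
  have hinf : {x : ℂ | P.IsRoot x}.Infinite := by
    refine Set.infinite_of_injective_forall_mem
      (f := fun k : ℕ => -c - 2 * (k : ℂ)) ?_ hroot
    intro a b hab
    have : (a : ℂ) = b := by
      simp only at hab
      linear_combination -hab / 2
    exact_mod_cast this
  exact hinf hfin
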